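/- Let m ≥ 1 be an integer. For every n ≥ 1 and every tuple (a_1, …, a_n) ∈ (Fin m)^n, the operator product P_{a_1}·C_G · P_{a_2}·C_G ⋯ P_{a_n}·C_G equals ((−1)^n / m^{(2n−1)/2}) · [∏_{j=1}^{n−1} (m·δ_{a_j,a_{j+1}} − 2)] · (√m·|a_1⟩⟨a_n| − 2·|a_1⟩⟨s|), where δ_{a,b} = 1 if a = b and 0 otherwise (the empty product for n = 1 is 1). -/

import Mathlib

noncomputable section

open scoped BigOperators

/-- The complex Euclidean space `ℂ^m`. -/
abbrev H (m : ℕ) := EuclideanSpace ℂ (Fin m)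

/-- The computational orthonormal basis vector `|a⟩`. -/
def ket {m : ℕ} (a : Fin m) : H m := EuclideanSpace.single a 1

/-- The uniform superposition `|s⟩ = (1/√m) Σ_a |a⟩`. -/
def ketS (m : ℕ) : H m := ((Real.sqrt m : ℂ))⁻¹ • ∑ a : Fin m, ket a

/-- The outer product `|x⟩⟨y|`, i.e. `v ↦ ⟪y, v⟫ • x`. -/
def outer {m : ℕ} (x y : H m) : H m →L[ℂ] H m := (innerSL ℂ y).smulRight x

/-- The projection `P_a = |a⟩⟨a|`. -/
def P {m : ℕ} (a : Fin m) : H m →L[ℂ] H m := outer (ket a) (ket a)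

/-- The Grover coin `C_G = 2|s⟩⟨s| - 1`. -/
def groverC (m : ℕ) : H m →L[ℂ] H m := (2 : ℂ) • outer (ketS m) (ketS m) - 1

/-- `Ξ₀(a_1, …, a_n) = ∏_{j=1}^{n-1} (m δ_{a_j, a_{j+1}} - 2)` (empty product is 1). -/
def Xi0 (m n : ℕ) (a : Fin n → Fin m) : ℂ :=
  ∏ j : Fin n, if h : (j : ℕ) + 1 < n then
    ((m : ℂ) * (if a j = a ⟨(j : ℕ) + 1, h⟩ then 1 else 0) - 2) else 1

variable {m : ℕ}


lemma outer_mul_outer (x y u v : H m) :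
    outer x y * outer u v = (inner ℂ y u : ℂ) • outer x v := by
  ext w
  simp only [outer, ContinuousLinearMap.mul_apply, ContinuousLinearMap.smulRight_apply,
    innerSL_apply_apply, ContinuousLinearMap.smul_apply, inner_smul_right, PiLp.smul_apply,
    smul_eq_mul]
  ring

lemma inner_ket_ket (a b : Fin m) :
    (inner ℂ (ket a) (ket b) : ℂ) = if a = b then 1 else 0 := by
  simp [ket, EuclideanSpace.inner_single_left, EuclideanSpace.single_apply, eq_comm]

lemma inner_ket_ketS (a : Fin m) :
    (inner ℂ (ket a) (ketS m) : ℂ) = ((Real.sqrt m : ℂ))⁻¹ := by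
  rw [ketS, inner_smul_right, inner_sum]
  simp only [inner_ket_ket, Finset.sum_ite_eq, Finset.mem_univ, if_true, mul_one]

lemma inner_ketS_ket (a : Fin m) :
    (inner ℂ (ketS m) (ket a) : ℂ) = ((Real.sqrt m : ℂ))⁻¹ := by
  rw [ketS, inner_smul_left, sum_inner]
  simp only [inner_ket_ket, Finset.sum_ite_eq', Finset.mem_univ, if_true, map_inv₀,
    Complex.conj_ofReal, mul_one]

lemma inner_ketS_ketS (hm : 1 ≤ m) :
    (inner ℂ (ketS m) (ketS m) : ℂ) = 1 := by
  have hs : ((Real.sqrt m : ℂ)) ≠ 0 := by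
    have : (0:ℝ) < Real.sqrt m := Real.sqrt_pos.2 (by exact_mod_cast hm)
    exact_mod_cast this.ne'
  have hsq : ((Real.sqrt m : ℂ)) * ((Real.sqrt m : ℂ)) = (m : ℂ) := by
    have : Real.sqrt m * Real.sqrt m = (m:ℝ) := Real.mul_self_sqrt (by positivity)
    exact_mod_cast this
  rw [ketS, inner_smul_left, inner_smul_right, sum_inner]
  simp only [inner_sum, inner_ket_ket, Finset.sum_ite_eq, Finset.mem_univ, if_true,
    Finset.sum_const, Finset.card_univ, Fintype.card_fin, nsmul_eq_mul, mul_one,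
    map_inv₀, Complex.conj_ofReal]
  field_simp
  exact (sq _).trans hsq |>.symm

lemma PC_eq (a : Fin m) :
    P a * groverC m
      = (2 * ((Real.sqrt m : ℂ))⁻¹) • outer (ket a) (ketS m) - outer (ket a) (ket a) := by
  rw [P, groverC, mul_sub, mul_one, mul_smul_comm, outer_mul_outer, inner_ket_ketS,
    smul_smul]

lemma combo {M : Type*} [AddCommGroup M] [Module ℂ M] (O1 O2 : M) (x1 x2 y1 y2 z w : ℂ)
    (h1 : x1 - x2 = z) (h2 : y1 - y2 = w) :
    x1 • O1 - x2 • O1 - (y1 • O2 - y2 • O2) = z • O1 - w • O2 := by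
  rw [← sub_smul, ← sub_smul, h1, h2]

set_option maxHeartbeats 1000000 in
lemma step (hm : 1 ≤ m) (a b c : Fin m) :
    (P a * groverC m) *
        (((Real.sqrt m : ℂ)) • outer (ket b) (ket c) - (2:ℂ) • outer (ket b) (ketS m))
      = ((-((m:ℂ) * (if a = b then 1 else 0) - 2)) / m) •
          (((Real.sqrt m : ℂ)) • outer (ket a) (ket c) - (2:ℂ) • outer (ket a) (ketS m)) := by
  have hs : ((Real.sqrt m : ℂ)) ≠ 0 := by
    have : (0:ℝ) < Real.sqrt m := Real.sqrt_pos.2 (by exact_mod_cast hm)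
    exact_mod_cast this.ne'
  have hsq : ((Real.sqrt m : ℂ)) * ((Real.sqrt m : ℂ)) = (m : ℂ) := by
    have : Real.sqrt m * Real.sqrt m = (m:ℝ) := Real.mul_self_sqrt (by positivity)
    exact_mod_cast this
  have hm0 : ((m:ℂ)) ≠ 0 := (Nat.cast_ne_zero (R := ℂ)).2 (by omega)
  rw [PC_eq]
  simp only [sub_mul, mul_sub, smul_mul_assoc, mul_smul_comm, outer_mul_outer,
    inner_ketS_ket, inner_ket_ket, smul_smul, smul_sub]
  by_cases h : a = b
  · simp only [h, if_pos rfl, if_true]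
    refine combo _ _ _ _ _ _ _ _ ?_ ?_ <;> field_simp <;> ring_nf <;>
      rw [← hsq] <;> ring
  · simp only [if_neg h]
    refine combo _ _ _ _ _ _ _ _ ?_ ?_ <;> field_simp <;> ring_nf <;>
      rw [← hsq] <;> ring

lemma Xi0_one (a : Fin 1 → Fin m) : Xi0 m 1 a = 1 := by
  simp [Xi0]

lemma Xi0_succ {n : ℕ} (hn : 1 ≤ n) (a : Fin (n + 1) → Fin m) :
    Xi0 m (n + 1) a
      = ((m : ℂ) * (if a 0 = a ((⟨0, by omega⟩ : Fin n)).succ then 1 else 0) - 2)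
          * Xi0 m n (fun j => a j.succ) := by
  rw [Xi0, Fin.prod_univ_succ, Xi0]
  congr 1
  · rw [dif_pos (show (((0 : Fin (n+1)) : ℕ)) + 1 < n + 1 by simp only [Fin.val_zero]; omega)]
    congr 2
  · refine Finset.prod_congr rfl fun j _ => ?_
    by_cases h : (j : ℕ) + 1 < n
    · rw [dif_pos (show ((j.succ : Fin (n+1)) : ℕ) + 1 < n + 1 by simp only [Fin.val_succ]; omega), dif_pos h]
      congr 2
    · rw [dif_neg (by simp only [Fin.val_succ]; omega), dif_neg h]


set_option maxHeartbeats 1000000 in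
/-- Lemma 2 of the paper: for every tuple `(a_1, …, a_n)`,
`P_{a_1} C_G ⋯ P_{a_n} C_G
  = ((-1)^n / m^{(2n-1)/2}) Ξ₀(a) (√m |a_1⟩⟨a_n| - 2 |a_1⟩⟨s|)`. -/
theorem grover_proj_prod (m : ℕ) (hm : 1 ≤ m) (n : ℕ) (hn : 1 ≤ n) (a : Fin n → Fin m) :
    (List.ofFn (fun j : Fin n => P (a j) * groverC m)).prod
      = (((-1 : ℂ) ^ n / ((Real.sqrt m : ℂ)) ^ (2 * n - 1)) * Xi0 m n a) •
          (((Real.sqrt m : ℂ)) • outer (ket (a ⟨0, by omega⟩)) (ket (a ⟨n - 1, by omega⟩))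
            - (2 : ℂ) • outer (ket (a ⟨0, by omega⟩)) (ketS m)) := by

  have hs : ((Real.sqrt m : ℂ)) ≠ 0 := by
    have : (0:ℝ) < Real.sqrt m := Real.sqrt_pos.2 (by exact_mod_cast hm)
    exact_mod_cast this.ne'
  have hsq : ((Real.sqrt m : ℂ)) * ((Real.sqrt m : ℂ)) = (m : ℂ) := by
    have : Real.sqrt m * Real.sqrt m = (m:ℝ) := Real.mul_self_sqrt (by positivity)
    exact_mod_cast this
  have hm0 : ((m:ℂ)) ≠ 0 := (Nat.cast_ne_zero (R := ℂ)).2 (by omega)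
  induction n, hn using Nat.le_induction with
  | base =>
      have h0 : (⟨0, by omega⟩ : Fin 1) = 0 := by ext; simp
      simp only [List.ofFn_succ, List.ofFn_zero, List.prod_cons, List.prod_nil, mul_one,
        Xi0_one, h0]
      rw [PC_eq]
      match_scalars <;> field_simp <;> norm_num
  | succ n hn ih =>
      have h0 : (⟨0, by omega⟩ : Fin (n+1)) = 0 := by ext; simp
      have h0' : (⟨0, by omega⟩ : Fin n) = ⟨0, by omega⟩ := rfl
      have hlast : ((⟨n - 1, by omega⟩ : Fin n)).succ = (⟨n + 1 - 1, by omega⟩ : Fin (n+1)) := by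
        ext; simp; omega
      rw [List.ofFn_succ, List.prod_cons]
      rw [show (List.ofFn fun i : Fin n => P (a i.succ) * groverC m).prod
            = _ from ih (fun j => a j.succ)]
      rw [mul_smul_comm, hlast]
      rw [step hm (a 0) (a (Fin.succ ⟨0, by omega⟩)) (a ⟨n + 1 - 1, by omega⟩)]
      rw [smul_smul, Xi0_succ hn a, h0]
      congr 1
      have hp : ((Real.sqrt m : ℂ)) ^ (2 * (n + 1) - 1)
          = ((Real.sqrt m : ℂ)) ^ (2 * n - 1) * (m : ℂ) := by
        rw [show 2 * (n + 1) - 1 = (2 * n - 1) + 2 by omega, pow_add, sq, hsq]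
      rw [hp, pow_succ]
      have hpow : ((Real.sqrt m : ℂ)) ^ (2 * n - 1) ≠ 0 := pow_ne_zero _ hs
      field_simp
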